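/- Let R = ℂ[X^{±1}, y, z], let σ be the ℂ-algebra automorphism of R with σ(X)=X⁻¹, σ(y)=y, σ(z)=z, and let δ be the σ-derivation of R determined by δ(X)=2z, δ(X⁻¹)=−2z, δ(y)=δ(z)=0. Then for every k ∈ ℤ, δ(X^k) = 2z·U_{k−1}(x), where x = (X+X⁻¹)/2 and U denotes the Chebyshev polynomial of the second kind (with U_{−1}=0 and U_{−1−m}(x) = −U_{m−1}(x)). -/

import Mathlib

open Polynomial Polynomial.Chebyshev

/-- `R = ℂ[X^{±1}, y, z]`, realized as Laurent polynomials in `X` over `ℂ[y, z]`. -/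
noncomputable abbrev BHRing : Type := LaurentPolynomial (MvPolynomial (Fin 2) ℂ)

/-- The generator `X` of `R = ℂ[X^{±1}, y, z]`. -/
noncomputable abbrev BHX : BHRing := LaurentPolynomial.T 1

/-- The generator `y` of `R = ℂ[X^{±1}, y, z]`. -/
noncomputable abbrev BHy : BHRing := LaurentPolynomial.C (MvPolynomial.X 0)

/-- The generator `z` of `R = ℂ[X^{±1}, y, z]`. -/
noncomputable abbrev BHz : BHRing := LaurentPolynomial.C (MvPolynomial.X 1)

namespace BHAux

local notation "LT" => (LaurentPolynomial.T (R := MvPolynomial (Fin 2) ℂ))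

lemma Tmul (a b : ℤ) : (LT a) * (LT b) = LT (a + b) :=
  (LaurentPolynomial.T_add a b).symm

lemma Tinv : (LT (-1)) * (LT 1) = 1 := by
  rw [Tmul]; norm_num [LaurentPolynomial.T_zero]

/-- Key identity: `U_k(x) = X^{-k} + X·U_{k-1}(x)` when `2x = X + X⁻¹`. -/
lemma chebA (x : BHRing) (hx : 2 * x = LT 1 + LT (-1)) :
    ∀ k : ℤ, aeval x (U ℂ k) = LT (-k) + LT 1 * aeval x (U ℂ (k - 1)) := by
  have hstep_up : ∀ k : ℤ,
      aeval x (U ℂ k) = LT (-k) + LT 1 * aeval x (U ℂ (k - 1)) →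
      aeval x (U ℂ (k + 1)) = LT (-(k + 1)) + LT 1 * aeval x (U ℂ (k + 1 - 1)) := by
    intro k hA
    have hrec := congrArg (aeval x) (U_add_one ℂ k)
    simp only [map_sub, map_mul, map_ofNat, aeval_X] at hrec
    rw [show (k + 1 - 1 : ℤ) = k by ring]
    have e1 : (LT (-1)) * (LT (-k)) = LT (-(k + 1)) := by
      rw [Tmul, show (-1 + -k : ℤ) = -(k + 1) by ring]
    linear_combination hrec + aeval x (U ℂ k) * hx
      + LT (-1) * hA + aeval x (U ℂ (k - 1)) * Tinv + e1
  have hstep_down : ∀ k : ℤ,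
      aeval x (U ℂ k) = LT (-k) + LT 1 * aeval x (U ℂ (k - 1)) →
      aeval x (U ℂ (k - 1)) = LT (-(k - 1)) + LT 1 * aeval x (U ℂ (k - 1 - 1)) := by
    intro k hA
    have hrec := congrArg (aeval x) (U_sub_two ℂ k)
    simp only [map_sub, map_mul, map_ofNat, aeval_X] at hrec
    rw [show (k - 1 - 1 : ℤ) = k - 2 by ring]
    have e1 : (LT 1) * (LT (-k)) = LT (-(k - 1)) := by
      rw [Tmul, show (1 + -k : ℤ) = -(k - 1) by ring]
    linear_combination -(LT 1) * hrec - (LT 1 * aeval x (U ℂ (k - 1))) * hx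
      + LT 1 * hA - aeval x (U ℂ (k - 1)) * Tinv + e1
  intro k
  induction k using Int.induction_on with
  | zero => simp [LaurentPolynomial.T_zero]
  | succ n ih => exact hstep_up n ih
  | pred n ih => exact hstep_down (-n) ih
end BHAux

/-- Let `R = ℂ[X^{±1}, y, z]`, let `σ` be the `ℂ`-algebra automorphism with
`σ(X) = X⁻¹`, `σ(y) = y`, `σ(z) = z`, and let `δ` be the `σ`-derivation
(`δ(ab) = σ(a)δ(b) + δ(a)b`) determined by `δ(X) = 2z`, `δ(X⁻¹) = −2z`,
`δ(y) = δ(z) = 0`.  Then for every `k ∈ ℤ`, `δ(X^k) = 2z·U_{k−1}(x)`, where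
`x = (X + X⁻¹)/2` and `U` is the Chebyshev polynomial of the second kind
(indexed by `ℤ`, so that `U_{−1} = 0` and `U_{−1−m} = −U_{m−1}`). -/
theorem sigma_derivation_of_laurent_power
    (σ : BHRing ≃ₐ[ℂ] BHRing)
    (hσX : σ BHX = LaurentPolynomial.T (-1))
    (hσy : σ BHy = BHy) (hσz : σ BHz = BHz)
    (δ : BHRing →ₗ[ℂ] BHRing)
    (hLeib : ∀ a b : BHRing, δ (a * b) = σ a * δ b + δ a * b)
    (hδX : δ BHX = 2 * BHz)
    (hδXinv : δ (LaurentPolynomial.T (-1)) = -(2 * BHz))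
    (hδy : δ BHy = 0) (hδz : δ BHz = 0)
    (x : BHRing) (hx : 2 * x = BHX + LaurentPolynomial.T (-1)) :
    ∀ k : ℤ, δ (LaurentPolynomial.T k) = 2 * BHz * aeval x (U ℂ (k - 1)) := by
  have hσXinv : σ (LaurentPolynomial.T (-1) : BHRing) = LaurentPolynomial.T 1 := by
    have h1 := congrArg σ BHAux.Tinv
    rw [map_mul, map_one, hσX] at h1
    have h2 := congrArg (· * (LaurentPolynomial.T 1 : BHRing)) h1
    simp only [one_mul, mul_assoc, BHAux.Tinv, mul_one] at h2
    exact h2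
  have hσT : ∀ k : ℤ, σ (LaurentPolynomial.T k : BHRing) = LaurentPolynomial.T (-k) := by
    intro k
    induction k using Int.induction_on with
    | zero => simp [LaurentPolynomial.T_zero]
    | succ n ih =>
      rw [show (LaurentPolynomial.T ((n : ℤ) + 1) : BHRing)
            = LaurentPolynomial.T (n : ℤ) * LaurentPolynomial.T 1 from (BHAux.Tmul _ _).symm,
        map_mul, ih, hσX, BHAux.Tmul, show (-(n : ℤ) + -1) = -((n : ℤ) + 1) by ring]
    | pred n ih =>
      rw [show (LaurentPolynomial.T (-(n : ℤ) - 1) : BHRing)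
            = LaurentPolynomial.T (-(n : ℤ)) * LaurentPolynomial.T (-1) from by
          rw [BHAux.Tmul]; ring_nf,
        map_mul, ih, hσXinv, BHAux.Tmul, show (-(-(n : ℤ)) + 1) = -(-(n : ℤ) - 1) by ring]
  have hA := BHAux.chebA x hx
  have hδ1 : δ (1 : BHRing) = 0 := by
    have h := hLeib 1 1
    simp only [mul_one, map_one, one_mul] at h
    linear_combination -h
  intro k
  induction k using Int.induction_on with
  | zero =>
    rw [show (LaurentPolynomial.T (0 : ℤ) : BHRing) = 1 from LaurentPolynomial.T_zero, hδ1]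
    norm_num
  | succ n ih =>
    rw [show (LaurentPolynomial.T ((n : ℤ) + 1) : BHRing)
          = LaurentPolynomial.T (n : ℤ) * LaurentPolynomial.T 1 from (BHAux.Tmul _ _).symm,
      hLeib, hσT, hδX, ih, show ((n : ℤ) + 1 - 1) = (n : ℤ) by ring]
    linear_combination (-(2 * BHz)) * hA n
  | pred n ih =>
    rw [show (LaurentPolynomial.T (-(n : ℤ) - 1) : BHRing)
          = LaurentPolynomial.T (-(n : ℤ)) * LaurentPolynomial.T (-1) from by
        rw [BHAux.Tmul]; ring_nf,
      hLeib, hσT, hδXinv, ih, show (-(-(n : ℤ))) = (n : ℤ) by ring]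
    have hAn := hA (-(n : ℤ) - 1)
    rw [show (-(-(n : ℤ) - 1)) = (n : ℤ) + 1 by ring] at hAn
    have e1 : (LaurentPolynomial.T (-1) : BHRing) * LaurentPolynomial.T ((n : ℤ) + 1)
        = LaurentPolynomial.T (n : ℤ) := by
      rw [BHAux.Tmul, show (-1 + ((n : ℤ) + 1)) = (n : ℤ) by ring]
    linear_combination (2 * BHz * LaurentPolynomial.T (-1)) * hAn
      + (2 * BHz * aeval x (U ℂ (-(n : ℤ) - 1 - 1))) * BHAux.Tinv + (2 * BHz) * e1
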